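/- Let d ≥ 2 and let ρ be a density matrix on ℂ^d ⊗ ℂ^d. Then ρ has absolute fully entangled fraction (that is, F(UρU†) ≤ 1/d for every unitary U on ℂ^d ⊗ ℂ^d) if and only if the largest eigenvalue of ρ is at most 1/d. -/

import Mathlib

open Matrix Kronecker Complex
open scoped ComplexOrder

/-- The canonical maximally entangled vector `|ψ⁺⟩ = (1/√d) ∑ᵢ |ii⟩` on `ℂ^d ⊗ ℂ^d`. -/
noncomputable def psiPlus (d : ℕ) : (Fin d × Fin d) → ℂ :=
  fun p => if p.1 = p.2 then ((Real.sqrt d)⁻¹ : ℝ) else 0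

/-- The fully entangled fraction: the supremum over `d × d` unitaries `V` of
`⟨ψ⁺| (I ⊗ V)† ρ (I ⊗ V) |ψ⁺⟩`. -/
noncomputable def fef (d : ℕ) (ρ : Matrix (Fin d × Fin d) (Fin d × Fin d) ℂ) : ℝ :=
  ⨆ V : Matrix.unitaryGroup (Fin d) ℂ,
    (star (psiPlus d) ⬝ᵥ
      ((((1 : Matrix (Fin d) (Fin d) ℂ) ⊗ₖ (V : Matrix (Fin d) (Fin d) ℂ))ᴴ * ρ *
        ((1 : Matrix (Fin d) (Fin d) ℂ) ⊗ₖ (V : Matrix (Fin d) (Fin d) ℂ))) *ᵥ psiPlus d)).re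

/-- A density matrix: positive semidefinite with unit trace. -/
def IsDensityMatrix {n : Type*} [Fintype n] (ρ : Matrix n n ℂ) : Prop :=
  ρ.PosSemidef ∧ ρ.trace = 1

/-- `ρ` has absolute fully entangled fraction: `F(UρU†) ≤ 1/d` for every unitary `U`. -/
def AbsFEF (d : ℕ) (ρ : Matrix (Fin d × Fin d) (Fin d × Fin d) ℂ) : Prop :=
  ∀ U ∈ Matrix.unitaryGroup (Fin d × Fin d) ℂ, fef d (U * ρ * Uᴴ) ≤ 1 / d

section Aux

set_option linter.unusedSectionVars false

variable {n : Type*} [Fintype n] [DecidableEq n]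

/-- Conjugating a quadratic form. -/
lemma conj_quad (A P : Matrix n n ℂ) (x : n → ℂ) :
    star x ⬝ᵥ ((Pᴴ * A * P) *ᵥ x) = star (P *ᵥ x) ⬝ᵥ (A *ᵥ (P *ᵥ x)) := by
  rw [star_mulVec, mulVec_mulVec, dotProduct_mulVec, dotProduct_mulVec, vecMul_vecMul,
    Matrix.mul_assoc]

lemma unit_mulVec_unit {M : Matrix n n ℂ} (hM : M ∈ Matrix.unitaryGroup n ℂ)
    {x : n → ℂ} (hx : star x ⬝ᵥ x = 1) : star (M *ᵥ x) ⬝ᵥ (M *ᵥ x) = 1 := by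
  have h1 : Mᴴ * M = 1 := by
    simpa [Matrix.star_eq_conjTranspose] using (Matrix.mem_unitaryGroup_iff').mp hM
  have := conj_quad 1 M x
  rw [Matrix.mul_one, h1] at this
  simpa [hx] using this.symm

lemma sum_normSq_eq_one {y : n → ℂ} (hy : star y ⬝ᵥ y = 1) :
    ∑ i, Complex.normSq (y i) = 1 := by
  have : ((∑ i, Complex.normSq (y i) : ℝ) : ℂ) = 1 := by
    rw [Complex.ofReal_sum]
    rw [dotProduct] at hy
    simpa [← Complex.mul_conj, mul_comm] using hy
  exact_mod_cast this

/-- Quadratic form bound by an eigenvalue bound. -/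
lemma quad_form_le {A : Matrix n n ℂ} (hA : A.IsHermitian) {c : ℝ}
    (hc : ∀ i, hA.eigenvalues i ≤ c) {x : n → ℂ} (hx : star x ⬝ᵥ x = 1) :
    (star x ⬝ᵥ A *ᵥ x).re ≤ c := by
  set U : Matrix n n ℂ := (hA.eigenvectorUnitary : Matrix n n ℂ) with hU
  have hUmem : U ∈ Matrix.unitaryGroup n ℂ := hA.eigenvectorUnitary.2
  set y : n → ℂ := Uᴴ *ᵥ x with hydef
  have hy : star y ⬝ᵥ y = 1 := by
    refine unit_mulVec_unit ?_ hx
    simpa [Matrix.star_eq_conjTranspose] using Unitary.star_mem hUmem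
  have key : star x ⬝ᵥ A *ᵥ x
      = star y ⬝ᵥ (diagonal (RCLike.ofReal ∘ hA.eigenvalues)) *ᵥ y := by
    conv_lhs => rw [hA.spectral_theorem, Unitary.conjStarAlgAut_apply]
    have h2 : (star U : Matrix n n ℂ) = Uᴴ := by simp [Matrix.star_eq_conjTranspose]
    have h3 : U * diagonal (RCLike.ofReal ∘ hA.eigenvalues) * star U
        = Uᴴᴴ * diagonal (RCLike.ofReal ∘ hA.eigenvalues) * Uᴴ := by
      rw [h2, conjTranspose_conjTranspose]
    rw [h3, conj_quad]
  rw [key]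
  have hterm : (star y ⬝ᵥ (diagonal (RCLike.ofReal ∘ hA.eigenvalues)) *ᵥ y).re
      = ∑ i, hA.eigenvalues i * Complex.normSq (y i) := by
    rw [dotProduct]
    rw [Complex.re_sum]
    refine Finset.sum_congr rfl fun i _ => ?_
    rw [mulVec_diagonal]
    have hcoe : ((RCLike.ofReal ∘ hA.eigenvalues) i : ℂ) = Complex.ofReal (hA.eigenvalues i) := rfl
    have : star y i * ((RCLike.ofReal ∘ hA.eigenvalues) i * y i)
        = ((hA.eigenvalues i * Complex.normSq (y i) : ℝ) : ℂ) := by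
      rw [hcoe]
      have : star y i * ((hA.eigenvalues i : ℂ) * y i)
          = (hA.eigenvalues i : ℂ) * (y i * (starRingEnd ℂ) (y i)) := by
        simp only [Pi.star_apply, Complex.star_def]; ring
      rw [this, Complex.mul_conj]
      push_cast
      ring
    rw [this, Complex.ofReal_re]
  rw [hterm]
  calc ∑ i, hA.eigenvalues i * Complex.normSq (y i)
      ≤ ∑ i, c * Complex.normSq (y i) := by
        refine Finset.sum_le_sum fun i _ => ?_
        exact mul_le_mul_of_nonneg_right (hc i) (Complex.normSq_nonneg _)
    _ = c := by rw [← Finset.mul_sum, sum_normSq_eq_one hy, mul_one]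

open scoped InnerProductSpace in
lemma exists_onb_eq [Nonempty n] {u : n → ℂ} (hu : star u ⬝ᵥ u = 1) (i₀ : n) :
    ∃ b : OrthonormalBasis n ℂ (EuclideanSpace ℂ n), ⇑(b i₀) = u := by
  set u' : EuclideanSpace ℂ n := (WithLp.equiv 2 (n → ℂ)).symm u with hu'
  have hnorm : ‖u'‖ = 1 := by
    have h1 : (⟪u', u'⟫_ℂ) = 1 := by
      rw [EuclideanSpace.inner_eq_star_dotProduct, dotProduct_comm]
      exact hu
    have h2 : (⟪u', u'⟫_ℂ) = ((‖u'‖ : ℂ))^2 := by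
      rw [inner_self_eq_norm_sq_to_K]; rfl
    rw [h2] at h1
    have : (‖u'‖ : ℝ)^2 = 1 := by exact_mod_cast h1
    nlinarith [norm_nonneg u']
  have horth : Orthonormal ℂ (({i₀} : Set n).restrict (fun _ : n => u')) := by
    constructor
    · intro i; exact hnorm
    · intro i j hij
      exact absurd (Subtype.ext ((i.2 : (i : n) ∈ ({i₀} : Set n)).trans
        ((j.2 : (j : n) ∈ ({i₀} : Set n)).symm))) hij
  obtain ⟨b, hb⟩ := horth.exists_orthonormalBasis_extension_of_card_eq
    (finrank_euclideanSpace (𝕜 := ℂ) (ι := n))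
  exact ⟨b, by rw [hb i₀ rfl]; exact (WithLp.equiv 2 _).apply_symm_apply u⟩

lemma exists_unitary_mulVec_eq [Nonempty n] {u v : n → ℂ}
    (hu : star u ⬝ᵥ u = 1) (hv : star v ⬝ᵥ v = 1) :
    ∃ M ∈ Matrix.unitaryGroup n ℂ, M *ᵥ u = v := by
  obtain i₀ := Classical.arbitrary n
  obtain ⟨b, hb⟩ := exists_onb_eq hu i₀
  obtain ⟨c, hc⟩ := exists_onb_eq hv i₀
  set B : Matrix n n ℂ := (EuclideanSpace.basisFun n ℂ).toBasis.toMatrix b.toBasis with hB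
  set C : Matrix n n ℂ := (EuclideanSpace.basisFun n ℂ).toBasis.toMatrix c.toBasis with hC
  have hBmem : B ∈ Matrix.unitaryGroup n ℂ :=
    (EuclideanSpace.basisFun n ℂ).toMatrix_orthonormalBasis_mem_unitary b
  have hCmem : C ∈ Matrix.unitaryGroup n ℂ :=
    (EuclideanSpace.basisFun n ℂ).toMatrix_orthonormalBasis_mem_unitary c
  have hBapp : ∀ i j, B i j = (b j) i := fun i j => rfl
  have hCapp : ∀ i j, C i j = (c j) i := fun i j => rfl
  have hBcol : B *ᵥ Pi.single i₀ 1 = u := by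
    funext i
    rw [← hb]
    simp [hBapp]
  have hCcol : C *ᵥ Pi.single i₀ 1 = v := by
    funext i
    rw [← hc]
    simp [hCapp]
  refine ⟨C * star B, mul_mem hCmem (Unitary.star_mem hBmem), ?_⟩
  have hstarB : star B *ᵥ u = Pi.single i₀ 1 := by
    rw [← hBcol, mulVec_mulVec, Unitary.coe_star_mul_self ⟨B, hBmem⟩, one_mulVec]
  rw [← mulVec_mulVec, hstarB, hCcol]

end Aux

lemma psiPlus_unit {d : ℕ} (hd : 0 < d) : star (psiPlus d) ⬝ᵥ psiPlus d = 1 := by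
  have hdC : (d : ℂ) ≠ 0 := by exact_mod_cast hd.ne'
  rw [dotProduct]
  have expand : ∀ p : Fin d × Fin d,
      star (psiPlus d p) * psiPlus d p = if p.1 = p.2 then ((d:ℂ))⁻¹ else 0 := by
    intro p; unfold psiPlus; by_cases h : p.1 = p.2 <;> simp [h]
    rw [← mul_inv, ← Complex.ofReal_mul, Real.mul_self_sqrt (Nat.cast_nonneg d)]
    push_cast
    ring
  simp only [Pi.star_apply, expand]
  rw [Fintype.sum_prod_type]
  simp [Finset.sum_ite_eq, Finset.card_univ]
  rw [mul_inv_cancel₀ hdC]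

lemma one_kron_mem {d : ℕ} {V : Matrix (Fin d) (Fin d) ℂ}
    (hV : V ∈ Matrix.unitaryGroup (Fin d) ℂ) :
    (1 : Matrix (Fin d) (Fin d) ℂ) ⊗ₖ V ∈ Matrix.unitaryGroup (Fin d × Fin d) ℂ := by
  have hstar : star ((1 : Matrix (Fin d) (Fin d) ℂ) ⊗ₖ V)
      = (1 : Matrix (Fin d) (Fin d) ℂ) ⊗ₖ (star V) := by
    ext ⟨i₁, i₂⟩ ⟨j₁, j₂⟩
    by_cases h : i₁ = j₁
    · subst h
      simp [Matrix.star_eq_conjTranspose, conjTranspose_apply, kroneckerMap_apply,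
        Matrix.one_apply]
    · simp [Matrix.star_eq_conjTranspose, conjTranspose_apply, kroneckerMap_apply,
        Matrix.one_apply, h, Ne.symm h]
  rw [Matrix.mem_unitaryGroup_iff, hstar, ← mul_kronecker_mul, one_mul,
    (Matrix.mem_unitaryGroup_iff).mp hV, one_kronecker_one]

lemma term_le {d : ℕ} (hd0 : 0 < d) {ρ : Matrix (Fin d × Fin d) (Fin d × Fin d) ℂ}
    (hH : ρ.IsHermitian) {c : ℝ} (hc : ∀ i, hH.eigenvalues i ≤ c)
    {U : Matrix (Fin d × Fin d) (Fin d × Fin d) ℂ}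
    (hU : U ∈ Matrix.unitaryGroup (Fin d × Fin d) ℂ) (V : Matrix.unitaryGroup (Fin d) ℂ) :
    (star (psiPlus d) ⬝ᵥ
      ((((1 : Matrix (Fin d) (Fin d) ℂ) ⊗ₖ (V : Matrix (Fin d) (Fin d) ℂ))ᴴ * (U * ρ * Uᴴ) *
        ((1 : Matrix (Fin d) (Fin d) ℂ) ⊗ₖ (V : Matrix (Fin d) (Fin d) ℂ))) *ᵥ psiPlus d)).re
      ≤ c := by
  set W : Matrix (Fin d × Fin d) (Fin d × Fin d) ℂ :=
    (1 : Matrix (Fin d) (Fin d) ℂ) ⊗ₖ (V : Matrix (Fin d) (Fin d) ℂ) with hW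
  have hWmem : W ∈ Matrix.unitaryGroup (Fin d × Fin d) ℂ := one_kron_mem V.2
  have hrw : Wᴴ * (U * ρ * Uᴴ) * W = (Uᴴ * W)ᴴ * ρ * (Uᴴ * W) := by
    rw [conjTranspose_mul, conjTranspose_conjTranspose]
    simp only [Matrix.mul_assoc]
  rw [hrw, conj_quad]
  have hUW : Uᴴ * W ∈ Matrix.unitaryGroup (Fin d × Fin d) ℂ := by
    refine mul_mem ?_ hWmem
    simpa [Matrix.star_eq_conjTranspose] using Unitary.star_mem hU
  exact quad_form_le hH hc (unit_mulVec_unit hUW (psiPlus_unit hd0))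

lemma fef_conj_le {d : ℕ} (hd0 : 0 < d) {ρ : Matrix (Fin d × Fin d) (Fin d × Fin d) ℂ}
    (hH : ρ.IsHermitian) {c : ℝ} (hc : ∀ i, hH.eigenvalues i ≤ c)
    {U : Matrix (Fin d × Fin d) (Fin d × Fin d) ℂ}
    (hU : U ∈ Matrix.unitaryGroup (Fin d × Fin d) ℂ) :
    fef d (U * ρ * Uᴴ) ≤ c := by
  haveI : Nonempty (Matrix.unitaryGroup (Fin d) ℂ) := ⟨1⟩
  exact ciSup_le fun V => term_le hd0 hH hc hU V

/-- A density matrix on `ℂ^d ⊗ ℂ^d` has absolute fully entangled fraction iff its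
largest eigenvalue is at most `1/d`. -/
theorem absFEF_iff_maxEigenvalue_le (d : ℕ) (hd : 2 ≤ d)
    (ρ : Matrix (Fin d × Fin d) (Fin d × Fin d) ℂ) (hρ : IsDensityMatrix ρ) :
    AbsFEF d ρ ↔ ∀ i, hρ.1.isHermitian.eigenvalues i ≤ 1 / d := by
  have hd0 : 0 < d := lt_of_lt_of_le two_pos hd
  haveI : Nonempty (Fin d) := ⟨⟨0, hd0⟩⟩
  set hH : ρ.IsHermitian := hρ.1.isHermitian with hHdef
  constructor
  · intro habs i
    -- the eigenvector
    set v : (Fin d × Fin d) → ℂ := ⇑(hH.eigenvectorBasis i) with hv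
    have hvunit : star v ⬝ᵥ v = 1 := by
      have h2 := inner_self_eq_norm_sq_to_K (𝕜 := ℂ) (hH.eigenvectorBasis i)
      rw [EuclideanSpace.inner_eq_star_dotProduct] at h2
      rw [hH.eigenvectorBasis.orthonormal.1 i, dotProduct_comm] at h2
      simpa using h2
    obtain ⟨M, hM, hMv⟩ := exists_unitary_mulVec_eq hvunit (psiPlus_unit hd0)
    refine le_trans ?_ (habs M hM)
    -- eigenvalue i ≤ fef d (M * ρ * Mᴴ)
    set c₀ : ℝ := Finset.univ.sup' (Finset.univ_nonempty) hH.eigenvalues with hc₀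
    set f : Matrix.unitaryGroup (Fin d) ℂ → ℝ := fun V =>
      (star (psiPlus d) ⬝ᵥ
        ((((1 : Matrix (Fin d) (Fin d) ℂ) ⊗ₖ (V : Matrix (Fin d) (Fin d) ℂ))ᴴ * (M * ρ * Mᴴ) *
          ((1 : Matrix (Fin d) (Fin d) ℂ) ⊗ₖ (V : Matrix (Fin d) (Fin d) ℂ))) *ᵥ psiPlus d)).re
      with hf
    have hbdd : BddAbove (Set.range f) := by
      refine ⟨c₀, ?_⟩
      rintro r ⟨V, rfl⟩
      exact term_le hd0 hH (fun j => Finset.le_sup' _ (Finset.mem_univ j)) hM V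
    have hle : f 1 ≤ fef d (M * ρ * Mᴴ) := le_ciSup hbdd 1
    refine le_trans (le_of_eq ?_) hle
    -- eigenvalue i = f 1
    have hone : ((1 : Matrix.unitaryGroup (Fin d) ℂ) : Matrix (Fin d) (Fin d) ℂ) = 1 := rfl
    have hMψ : Mᴴ *ᵥ psiPlus d = v := by
      rw [← hMv, mulVec_mulVec]
      have : Mᴴ * M = 1 := by
        simpa [Matrix.star_eq_conjTranspose] using (Matrix.mem_unitaryGroup_iff').mp hM
      rw [this, one_mulVec]
    have hf1 : f 1 = (star v ⬝ᵥ (ρ *ᵥ v)).re := by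
      rw [hf]
      simp only [hone, one_kronecker_one, conjTranspose_one, Matrix.one_mul, Matrix.mul_one]
      have hrw : M * ρ * Mᴴ = (Mᴴ)ᴴ * ρ * Mᴴ := by rw [conjTranspose_conjTranspose]
      rw [hrw, conj_quad, hMψ]
    rw [hf1]
    rw [hH.eigenvalues_eq i]
    rfl
  · intro h U hU
    exact fef_conj_le hd0 hH h hU
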